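/- Let F be a field, n a positive integer, and J an ideal of the formal power series ring F[[X_1,...,X_n]] that is strictly contained in the maximal ideal (X_1,...,X_n). Then F[[X_1,...,X_n]]/J admits a surjective F-algebra homomorphism onto F[T]/(T^2). -/

import Mathlib

open MvPowerSeries Finsupp

theorem aux_mem_span_X {F : Type*} [Field F] {n : ℕ} {f : MvPowerSeries (Fin n) F}
    (hf : (constantCoeff : MvPowerSeries (Fin n) F →+* F) f = 0) :
    f ∈ Ideal.span (Set.range (X : Fin n → MvPowerSeries (Fin n) F)) := by
  classical
  set g : Fin n → MvPowerSeries (Fin n) F := fun i e =>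
    if ∀ j < i, e j = 0 then coeff (e + Finsupp.single i 1) f else 0 with hg
  have key : f = ∑ i : Fin n, X i * g i := by
    ext d
    rw [map_sum]
    by_cases hd : d = 0
    · subst hd
      simp only [coeff_zero_X_mul, Finset.sum_const_zero]
      rw [coeff_zero_eq_constantCoeff_apply, hf]
    · have hsupp : d.support.Nonempty := Finsupp.support_nonempty_iff.mpr hd
      set i₀ := d.support.min' hsupp with hi₀
      have hmem : d i₀ ≠ 0 := Finsupp.mem_support_iff.mp (d.support.min'_mem hsupp)
      have hlt : ∀ j < i₀, d j = 0 := fun j hj => by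
        by_contra h
        exact absurd (d.support.min'_le j (Finsupp.mem_support_iff.mpr h)) (not_le.mpr hj)
      have hle : Finsupp.single i₀ 1 ≤ d := by
        rw [Finsupp.single_le_iff]; omega
      rw [Finset.sum_eq_single i₀]
      · rw [X_def, coeff_monomial_mul, if_pos hle, one_mul]
        show coeff d f = (if ∀ j < i₀, (d - Finsupp.single i₀ 1 : Fin n →₀ ℕ) j = 0 then
          coeff (d - Finsupp.single i₀ 1 + Finsupp.single i₀ 1) f else 0)
        rw [if_pos, tsub_add_cancel_of_le hle]
        intro j hj
        rw [Finsupp.tsub_apply, hlt j hj, Finsupp.single_apply,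
          if_neg (by exact fun h => absurd h (ne_of_gt hj))]
        simp
      · intro i _ hi
        rw [X_def, coeff_monomial_mul]
        split_ifs with h
        · rw [one_mul]
          show (if ∀ j < i, (d - Finsupp.single i 1 : Fin n →₀ ℕ) j = 0 then
            coeff (d - Finsupp.single i 1 + Finsupp.single i 1) f else 0) = 0
          refine if_neg ?_
          intro hall
          -- h : single i 1 ≤ d, so d i ≥ 1; i ≠ i₀
          have hdi : 1 ≤ d i := by simpa [Finsupp.single_le_iff] using h
          rcases lt_or_gt_of_ne hi with hlt' | hgt'
          · -- i < i₀ : d i = 0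
            have := hlt i hlt'; omega
          · -- i₀ < i : (d - single i 1) i₀ = d i₀ ≠ 0 contradicts hall
            have := hall i₀ hgt'
            rw [Finsupp.tsub_apply, Finsupp.single_apply,
              if_neg (fun hh => absurd hh (ne_of_gt hgt'))] at this
            omega
        · rfl
      · intro h
        exact absurd (Finset.mem_univ i₀) h
  rw [key]
  exact Ideal.sum_mem _ fun i _ => Ideal.mul_mem_right _ _ (Ideal.subset_span ⟨i, rfl⟩)

/-- Auxiliary algebra hom to the dual numbers built from a suitable linear functional. -/
noncomputable def auxHom {F : Type*} [Field F] {n : ℕ} (L : MvPowerSeries (Fin n) F →ₗ[F] F)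
    (hmul : ∀ f g : MvPowerSeries (Fin n) F,
      L (f * g) = (MvPowerSeries.constantCoeff : MvPowerSeries (Fin n) F →+* F) f * L g
        + (MvPowerSeries.constantCoeff : MvPowerSeries (Fin n) F →+* F) g * L f) :
    MvPowerSeries (Fin n) F →ₐ[F] DualNumber F where
  toFun f := ((MvPowerSeries.constantCoeff : MvPowerSeries (Fin n) F →+* F) f, L f)
  map_one' := by
    have hL1 : L 1 = 0 := by
      have := hmul 1 1
      simp only [one_mul, map_one] at this
      exact left_eq_add.mp this
    exact TrivSqZeroExt.ext (by simp) (by simp [hL1])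
  map_mul' f g := by
    refine TrivSqZeroExt.ext ?_ ?_
    · rw [map_mul]; rfl
    · rw [hmul]
      show constantCoeff f * L g + constantCoeff g * L f = constantCoeff f * L g + L f * constantCoeff g
      ring
  map_zero' := TrivSqZeroExt.ext (by simp) (by simp)
  map_add' f g := TrivSqZeroExt.ext (by rw [map_add]; rfl) (by rw [map_add L]; rfl)
  commutes' c := by
    have hL1 : L 1 = 0 := by
      have := hmul 1 1
      simp only [one_mul, map_one] at this
      exact left_eq_add.mp this
    refine TrivSqZeroExt.ext ?_ ?_
    · simp [TrivSqZeroExt.algebraMap_eq_inl', MvPowerSeries.algebraMap_apply]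
    · simp [TrivSqZeroExt.algebraMap_eq_inl', Algebra.algebraMap_eq_smul_one (A := MvPowerSeries (Fin n) F), hL1]

theorem auxHom_fst {F : Type*} [Field F] {n : ℕ} (L : MvPowerSeries (Fin n) F →ₗ[F] F)
    (hmul) (f : MvPowerSeries (Fin n) F) :
    (auxHom L hmul f).fst = (MvPowerSeries.constantCoeff : MvPowerSeries (Fin n) F →+* F) f := rfl

theorem auxHom_snd {F : Type*} [Field F] {n : ℕ} (L : MvPowerSeries (Fin n) F →ₗ[F] F)
    (hmul) (f : MvPowerSeries (Fin n) F) :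
    (auxHom L hmul f).snd = L f := rfl

/-- If `J` is an ideal of `F[[X_1, ..., X_n]]` strictly contained in the maximal ideal
`(X_1, ..., X_n)` (the ideal of power series with zero constant term), then
`F[[X_1, ..., X_n]]/J` admits a surjective `F`-algebra homomorphism onto the dual
numbers `F[T]/(T^2)`. -/
theorem stmt1 (F : Type*) [Field F] (n : ℕ) (hn : 0 < n)
    (J : Ideal (MvPowerSeries (Fin n) F))
    (hJ : J < RingHom.ker (MvPowerSeries.constantCoeff : MvPowerSeries (Fin n) F →+* F)) :
    ∃ f : (MvPowerSeries (Fin n) F ⧸ J) →ₐ[F] DualNumber F, Function.Surjective f := by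
  classical
  set R := MvPowerSeries (Fin n) F with hR
  set cc := (constantCoeff : MvPowerSeries (Fin n) F →+* F) with hcc
  set m : Ideal R := RingHom.ker cc with hm
  have hccsurj : Function.Surjective cc := fun x => ⟨C x, constantCoeff_C x⟩
  have hmax : m.IsMaximal := RingHom.ker_isMaximal_of_surjective cc hccsurj
  have hccalg : ∀ c : F, cc (algebraMap F R c) = c := fun c => by
    rw [hcc, MvPowerSeries.algebraMap_apply]
    simp
  have hmspan : m = Ideal.span (Set.range (X : Fin n → R)) := by
    apply le_antisymm
    · intro f hfm
      exact aux_mem_span_X hfm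
    · rw [Ideal.span_le]
      rintro _ ⟨i, rfl⟩
      exact constantCoeff_X i
  have hfg : m.FG := by
    rw [hmspan]
    exact Submodule.fg_span (Set.finite_range _)
  have hmle : m * m ≤ m := Ideal.mul_le_left
  -- Nakayama: m ≰ J ⊔ m * m
  have hne : ¬ (m ≤ J ⊔ m * m) := by
    intro hle
    have hmeqmax : m = IsLocalRing.maximalIdeal R := IsLocalRing.eq_maximalIdeal hmax
    have hjac : m ≤ Ideal.jacobson ⊥ := by
      rw [IsLocalRing.jacobson_eq_maximalIdeal ⊥ bot_ne_top, ← hmeqmax]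
    set N : Submodule R (R ⧸ J) := Submodule.map J.mkQ (m : Submodule R R) with hN
    have hNfg : N.FG := Submodule.FG.map _ hfg
    have hIN : N ≤ m • N := by
      rintro _ ⟨x, hx, rfl⟩
      obtain ⟨a, ha, b, hb, rfl⟩ := Submodule.mem_sup.mp (hle hx)
      have ha0 : J.mkQ a = 0 := (Submodule.Quotient.mk_eq_zero J).mpr ha
      have hab : J.mkQ (a + b) = J.mkQ b := by rw [map_add, ha0, zero_add]
      rw [hab]
      have hmem2 : J.mkQ b ∈ Submodule.map J.mkQ ((m • m : Ideal R) : Submodule R R) :=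
        ⟨b, by rwa [Ideal.smul_eq_mul], rfl⟩
      rw [Submodule.map_smul''] at hmem2
      exact hmem2
    have hbot : N = ⊥ := Submodule.eq_bot_of_le_smul_of_le_jacobson_bot m N hNfg hIN hjac
    have hmJ : m ≤ J := by
      intro x hx
      have hxN : J.mkQ x ∈ N := ⟨x, hx, rfl⟩
      rw [hbot, Submodule.mem_bot, Submodule.mkQ_apply,
        Submodule.Quotient.mk_eq_zero] at hxN
      exact hxN
    exact hJ.not_ge hmJ
  obtain ⟨g, hgm, hgK⟩ := SetLike.not_le_iff_exists.mp hne
  -- the F-subspace W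
  set K : Ideal R := J ⊔ m * m with hK
  have hKm : K ≤ m := sup_le hJ.le hmle
  set W : Submodule F R :=
    Submodule.restrictScalars F (K : Submodule R R) ⊔ Submodule.span F {(1 : R)} with hW
  have hgW : g ∉ W := by
    intro hgw
    obtain ⟨w, hw, s, hs, hws⟩ := Submodule.mem_sup.mp hgw
    obtain ⟨c, rfl⟩ := Submodule.mem_span_singleton.mp hs
    have hccw : cc w = 0 := hKm hw
    have hccg : cc g = 0 := hgm
    have hcc1 : cc (c • (1 : R)) = c := by
      rw [← Algebra.algebraMap_eq_smul_one, hccalg]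
    have hc0 : c = 0 := by
      have h' := congrArg cc hws
      rw [map_add, hccw, hcc1, hccg, zero_add] at h'
      exact h'
    rw [hc0, zero_smul, add_zero] at hws
    exact hgK (hws ▸ hw)
  -- linear functional
  obtain ⟨L0, hL0g, hL0W⟩ := Submodule.exists_dual_map_eq_bot_of_notMem hgW inferInstance
  set L : R →ₗ[F] F := (L0 g)⁻¹ • L0 with hL
  have hLW : ∀ w ∈ W, L w = 0 := by
    intro w hw
    have hmem : L0 w ∈ Submodule.map L0 W := ⟨w, hw, rfl⟩
    rw [hL0W, Submodule.mem_bot] at hmem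
    simp [hL, hmem]
  have hLg : L g = 1 := by simp [hL, inv_mul_cancel₀ hL0g]
  have hL1 : L 1 = 0 := hLW 1 (Submodule.mem_sup_right (Submodule.mem_span_singleton_self _))
  have hLK : ∀ x ∈ K, L x = 0 := fun x hx => hLW x (Submodule.mem_sup_left hx)
  have hLsq : ∀ x ∈ m, ∀ y ∈ m, L (x * y) = 0 := fun x hx y hy =>
    hLK _ (le_sup_right (a := J) (Ideal.mul_mem_mul hx hy))
  have hLsmul : ∀ (c : F) (x : R), L (c • x) = c * L x := fun c x => by
    rw [map_smul, smul_eq_mul]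
  have hLalg : ∀ c : F, L (algebraMap F R c) = 0 := fun c => by
    rw [Algebra.algebraMap_eq_smul_one, hLsmul, hL1, mul_zero]
  -- multiplicativity identity
  have hmul : ∀ f h : R, L (f * h) = cc f * L h + cc h * L f := by
    intro f h
    have h1 : f - algebraMap F R (cc f) ∈ m := by
      simp only [hm, RingHom.mem_ker, map_sub, hccalg, sub_self]
    have h2 : h - algebraMap F R (cc h) ∈ m := by
      simp only [hm, RingHom.mem_ker, map_sub, hccalg, sub_self]
    have key : f * h = (f - algebraMap F R (cc f)) * (h - algebraMap F R (cc h))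
        + cc f • h + cc h • f - algebraMap F R (cc f * cc h) := by
      rw [Algebra.smul_def, Algebra.smul_def, map_mul]
      ring
    rw [key, map_sub, map_add, map_add, hLsq _ h1 _ h2, hLsmul, hLsmul, hLalg]
    ring
  -- the algebra hom on R
  have hΦkill : ∀ a ∈ J, auxHom L hmul a = 0 := by
    intro a ha
    have ham : cc a = 0 := hJ.le ha
    have haK : a ∈ K := Submodule.mem_sup_left ha
    refine TrivSqZeroExt.ext ?_ ?_
    · show cc a = TrivSqZeroExt.fst (0 : DualNumber F)
      simpa using ham
    · show L a = TrivSqZeroExt.snd (0 : DualNumber F)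
      simpa using hLK a haK
  refine ⟨Ideal.Quotient.liftₐ J (auxHom L hmul) hΦkill, ?_⟩
  intro x
  refine ⟨Ideal.Quotient.mk J (algebraMap F R x.fst + x.snd • g), ?_⟩
  show auxHom L hmul (algebraMap F R x.fst + x.snd • g) = x
  refine TrivSqZeroExt.ext ?_ ?_
  · show cc (algebraMap F R (TrivSqZeroExt.fst x) + TrivSqZeroExt.snd x • g) = TrivSqZeroExt.fst x
    rw [map_add, hccalg]
    have hz : cc (x.snd • g) = 0 := by
      rw [Algebra.smul_def, map_mul, hgm, mul_zero]
    rw [hz, add_zero]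
  · show L (algebraMap F R (TrivSqZeroExt.fst x) + TrivSqZeroExt.snd x • g) = TrivSqZeroExt.snd x
    rw [map_add, hLalg, hLsmul, hLg, mul_one, zero_add]
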